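/- Let G = (V, E) be a finite simple graph and let A ⊆ V. Then there exists a unique set B with A ⊆ B ⊆ V such that G is collapsible onto B and B ⊆ C for every set C with A ⊆ C ⊆ V onto which G is collapsible; that is, the minimal collapsible set containing A exists and is unique. (The existence and uniqueness of minimal collapsible sets, which Theorem 2 of the paper relies on: the CMSA output equals this set B.) -/

import Mathlib

/-- `S` separates `X` from `Y` in `G`: every path in `G` from a vertex of `X`
to a vertex of `Y` contains a vertex of `S`. -/
def Separates {V : Type*} (G : SimpleGraph V) (X Y S : Set V) : Prop :=
  ∀ ⦃a b : V⦄, a ∈ X → b ∈ Y → ∀ p : G.Walk a b, p.IsPath → ∃ s ∈ S, s ∈ p.support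

/-- `S` is an `xy`-separator in `G`: `S ⊆ V \ {x, y}` and `S` separates `{x}` from `{y}`. -/
def IsSeparator {V : Type*} (G : SimpleGraph V) (x y : V) (S : Set V) : Prop :=
  S ⊆ ({x, y} : Set V)ᶜ ∧ Separates G {x} {y} S

/-- `S` is a minimal `xy`-separator in `G`: it is an `xy`-separator and no proper
subset of `S` is an `xy`-separator. -/
def IsMinSeparator {V : Type*} (G : SimpleGraph V) (x y : V) (S : Set V) : Prop :=
  IsSeparator G x y S ∧ ∀ T ⊂ S, ¬ IsSeparator G x y T

/-- `G` is collapsible onto `A` (Asmussen–Edwards characterization): for all pairwise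
disjoint `X, Y, Z` with `X ⊆ A` and `Y ⊆ A`, if `Z` separates `X` from `Y`, then so
does `Z ∩ A`. -/
def Collapsible {V : Type*} (G : SimpleGraph V) (A : Set V) : Prop :=
  ∀ X Y Z : Set V, X ⊆ A → Y ⊆ A → Disjoint X Y → Disjoint X Z → Disjoint Y Z →
    Separates G X Y Z → Separates G X Y (Z ∩ A)

/-- The neighbour set `N_G(W)`: vertices outside `W` adjacent in `G` to some vertex of `W`. -/
def nbhd {V : Type*} (G : SimpleGraph V) (W : Set V) : Set V :=
  {v | v ∉ W ∧ ∃ w ∈ W, G.Adj v w}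

/-- `M` is the vertex set of a connected component of the induced subgraph `G_W`. -/
def IsCompOf {V : Type*} (G : SimpleGraph V) (W M : Set V) : Prop :=
  ∃ c : (G.induce W).ConnectedComponent, M = Subtype.val '' c.supp

/-- A subset of `V` is complete in `G` if its vertices are pairwise adjacent. -/
def CompleteIn {V : Type*} (G : SimpleGraph V) (S : Set V) : Prop :=
  ∀ x ∈ S, ∀ y ∈ S, x ≠ y → G.Adj x y

lemma separates_congr {V : Type*} {G : SimpleGraph V} {X Y S T : Set V}
    (h : S = T) (hs : Separates G X Y S) : Separates G X Y T := h ▸ hs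

lemma collapsible_sInter {V : Type*} {G : SimpleGraph V} (𝒮 : Set (Set V))
    (hfin : 𝒮.Finite) :
    (∀ C ∈ 𝒮, Collapsible G C) →
    ∀ X Y Z : Set V, (∀ C ∈ 𝒮, X ⊆ C) → (∀ C ∈ 𝒮, Y ⊆ C) →
      Disjoint X Y → Disjoint X Z → Disjoint Y Z →
      Separates G X Y Z → Separates G X Y (Z ∩ ⋂₀ 𝒮) := by
  refine Set.Finite.induction_on
    (motive := fun 𝒯 _ => (∀ C ∈ 𝒯, Collapsible G C) →
      ∀ X Y Z : Set V, (∀ C ∈ 𝒯, X ⊆ C) → (∀ C ∈ 𝒯, Y ⊆ C) →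
        Disjoint X Y → Disjoint X Z → Disjoint Y Z →
        Separates G X Y Z → Separates G X Y (Z ∩ ⋂₀ 𝒯)) 𝒮 hfin ?_ ?_
  · intro _ X Y Z _ _ _ _ _ hsep
    simpa using hsep
  · intro C 𝒮 _ _ IH hcol X Y Z hX hY hXY hXZ hYZ hsep
    have h1 : Separates G X Y (Z ∩ ⋂₀ 𝒮) :=
      IH (fun D hD => hcol D (Set.mem_insert_of_mem _ hD))
        X Y Z (fun D hD => hX D (Set.mem_insert_of_mem _ hD))
        (fun D hD => hY D (Set.mem_insert_of_mem _ hD)) hXY hXZ hYZ hsep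
    have h2 : Separates G X Y ((Z ∩ ⋂₀ 𝒮) ∩ C) :=
      hcol C (Set.mem_insert _ _) X Y (Z ∩ ⋂₀ 𝒮)
        (hX C (Set.mem_insert _ _)) (hY C (Set.mem_insert _ _)) hXY
        (hXZ.mono_right Set.inter_subset_left)
        (hYZ.mono_right Set.inter_subset_left) h1
    apply separates_congr _ h2
    rw [Set.sInter_insert]
    ext v; simp only [Set.mem_inter_iff]; tauto

/-- Existence and uniqueness of the minimal collapsible set containing `A`. -/
theorem exists_unique_minimal_collapsible_set
    {V : Type*} [Fintype V] (G : SimpleGraph V) (A : Set V) :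
    ∃! B : Set V, A ⊆ B ∧ Collapsible G B ∧
      ∀ C : Set V, A ⊆ C → Collapsible G C → B ⊆ C := by
  classical
  set 𝒮 : Set (Set V) := {C | A ⊆ C ∧ Collapsible G C} with h𝒮
  have hfin : 𝒮.Finite := Set.toFinite _
  set B : Set V := ⋂₀ 𝒮 with hB
  have hAB : A ⊆ B := fun a ha => Set.mem_sInter.2 fun C hC => hC.1 ha
  have hmin : ∀ C : Set V, A ⊆ C → Collapsible G C → B ⊆ C :=
    fun C hAC hcC => Set.sInter_subset_of_mem ⟨hAC, hcC⟩
  have hcol : Collapsible G B := by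
    intro X Y Z hX hY hXY hXZ hYZ hsep
    exact collapsible_sInter 𝒮 hfin (fun C hC => hC.2) X Y Z
      (fun C hC => hX.trans (Set.sInter_subset_of_mem hC))
      (fun C hC => hY.trans (Set.sInter_subset_of_mem hC)) hXY hXZ hYZ hsep
  refine ⟨B, ⟨hAB, hcol, hmin⟩, ?_⟩
  rintro B' ⟨hAB', hcol', hmin'⟩
  exact Set.Subset.antisymm (hmin' B hAB hcol) (hmin B' hAB' hcol')
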